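/- arXiv:2303.16372 — 3 statements merged into one kernel-verified Lean document; each statement's English description precedes it below -/
import Mathlib

section
/- Let P and Q be probability measures on a measurable space such that for every measurable set T, P(T) ≤ e^γ·Q(T) and Q(T) ≤ e^γ·P(T) for some γ ≥ 0. Then the KL divergence satisfies D_KL(P‖Q) ≤ γ·(e^γ − 1)/(e^γ + 1) = γ·tanh(γ/2). -/
open MeasureTheory Real

/-- Chord bound for the convex function `r ↦ r * log r` on `[exp (-γ), exp γ]`. -/
lemma chord_bound_aux (γ : ℝ) (hγ : 0 ≤ γ) {r : ℝ} (h1 : exp (-γ) ≤ r) (h2 : r ≤ exp γ) :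
    r * log r ≤ γ * ((exp γ - 1) / (exp γ + 1))
      + γ * (exp γ + exp (-γ)) / (exp γ - exp (-γ)) * (r - 1) := by
  rcases eq_or_lt_of_le hγ with h0 | h0
  · have hr : r = 1 := le_antisymm (by simpa [← h0] using h2) (by simpa [← h0] using h1)
    simp [hr, ← h0]
  · set a := exp (-γ) with ha_def
    set b := exp γ with hb_def
    have ha : 0 < a := exp_pos _
    have hb1 : 1 < b := by simpa [hb_def] using exp_lt_exp.mpr h0
    have hab : a < b := exp_lt_exp.mpr (by linarith)
    have hba : 0 < b - a := by linarith
    set t : ℝ := (b - r) / (b - a) with ht_def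
    have ht0 : 0 ≤ t := div_nonneg (by linarith) hba.le
    have ht1 : t ≤ 1 := by rw [div_le_one hba]; linarith
    have hr : t • a + (1 - t) • b = r := by
      field_simp [ht_def]
      rw [ht_def, smul_eq_mul, smul_eq_mul, div_mul_eq_mul_div, one_sub_div hba.ne', div_mul_eq_mul_div, ← add_div,
        div_eq_iff hba.ne']; ring
    have key := convexOn_mul_log.2 (Set.mem_Ici.mpr ha.le)
      (Set.mem_Ici.mpr (by linarith : (0:ℝ) ≤ b))
      ht0 (by linarith : 0 ≤ 1 - t) (by ring)
    rw [hr] at key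
    simp only [smul_eq_mul] at key
    refine key.trans (le_of_eq ?_)
    rw [log_exp, log_exp]
    have hab1 : a = b⁻¹ := by rw [ha_def, hb_def, exp_neg]
    have hbne : b ≠ 0 := by positivity
    have h1b : b + 1 ≠ 0 := by positivity
    have h2b : b - b⁻¹ ≠ 0 := by
      have : b⁻¹ < 1 := inv_lt_one_of_one_lt₀ hb1
      intro h; nlinarith
    have hb2 : (-1 + b^2) ≠ 0 := by nlinarith
    have hb3 : (-b + b^3) ≠ 0 := by
      have : b^3 > b := by nlinarith [mul_pos (mul_pos (show (0:ℝ)<b by linarith)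
        (show (0:ℝ)<b-1 by linarith)) (show (0:ℝ)<b+1 by linarith)]
      intro h; nlinarith
    rw [hab1, ht_def, hab1]
    have hbb : b * b - 1 ≠ 0 := by nlinarith
    field_simp
    linear_combination (-(1 + b^2)) * mul_inv_cancel₀ hb2

/-- If P and Q are γ-indistinguishable (pure DP), then
`D_KL(P‖Q) ≤ γ·(e^γ − 1)/(e^γ + 1) = γ·tanh(γ/2)`. -/
theorem klDiv_le_of_dp {α : Type*} [MeasurableSpace α]
    (P Q : Measure α) [IsProbabilityMeasure P] [IsProbabilityMeasure Q]
    (γ : ℝ) (hγ : 0 ≤ γ)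
    (hPQ : ∀ T : Set α, MeasurableSet T → P T ≤ ENNReal.ofReal (exp γ) * Q T)
    (hQP : ∀ T : Set α, MeasurableSet T → Q T ≤ ENNReal.ofReal (exp γ) * P T) :
    (∫ x, llr P Q x ∂P) ≤ γ * ((exp γ - 1) / (exp γ + 1)) ∧
      γ * ((exp γ - 1) / (exp γ + 1)) = γ * tanh (γ / 2) := by
  constructor
  · -- main inequality
    set c : ℝ := γ * ((exp γ - 1) / (exp γ + 1)) with hc_def
    set A : ℝ := γ * (exp γ + exp (-γ)) / (exp γ - exp (-γ)) with hA_def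
    have hac : P ≪ Q := by
      refine Measure.AbsolutelyContinuous.mk fun s hs h0 => ?_
      have := hPQ s hs
      rw [h0, mul_zero] at this
      exact le_antisymm this zero_le
    -- upper bound on rnDeriv a.e. Q
    have hub : P.rnDeriv Q ≤ᵐ[Q] fun _ => ENNReal.ofReal (exp γ) := by
      refine ae_le_of_forall_setLIntegral_le_of_sigmaFinite (P.measurable_rnDeriv Q)
        fun s hs _ => ?_
      rw [Measure.setLIntegral_rnDeriv hac s, setLIntegral_const]
      exact hPQ s hs
    -- lower bound on rnDeriv a.e. Q
    have hlb : (fun _ => ENNReal.ofReal (exp (-γ))) ≤ᵐ[Q] P.rnDeriv Q := by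
      refine ae_le_of_forall_setLIntegral_le_of_sigmaFinite measurable_const
        fun s hs _ => ?_
      rw [Measure.setLIntegral_rnDeriv hac s, setLIntegral_const]
      have h1 : ENNReal.ofReal (exp (-γ)) * ENNReal.ofReal (exp γ) = 1 := by
        rw [← ENNReal.ofReal_mul (exp_pos _).le, ← exp_add]
        simp
      calc ENNReal.ofReal (exp (-γ)) * Q s
          ≤ ENNReal.ofReal (exp (-γ)) * (ENNReal.ofReal (exp γ) * P s) :=
            mul_le_mul_right (hQP s hs) _
        _ = P s := by rw [← mul_assoc, h1, one_mul]
    set r : α → ℝ := fun x => (P.rnDeriv Q x).toReal with hr_def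
    -- real-valued bounds a.e. Q
    have hbounds : ∀ᵐ x ∂Q, exp (-γ) ≤ r x ∧ r x ≤ exp γ := by
      filter_upwards [hub, hlb] with x h1 h2
      have hne : P.rnDeriv Q x ≠ ⊤ := (h1.trans_lt ENNReal.ofReal_lt_top).ne
      constructor
      · exact (ENNReal.ofReal_le_iff_le_toReal hne).mp h2
      · exact ENNReal.toReal_le_of_le_ofReal (exp_pos _).le h1
    -- key rewrite of the integral
    have hkey : (∫ x, llr P Q x ∂P) = ∫ x, r x * log (r x) ∂Q := by
      rw [← integral_rnDeriv_smul hac (f := llr P Q)]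
      simp [llr, hr_def, smul_eq_mul]
    -- measurability and integrability
    have hrmeas : Measurable r := (P.measurable_rnDeriv Q).ennreal_toReal
    have hint_r : Integrable r Q := Measure.integrable_toReal_rnDeriv
    have hgmeas : Measurable (fun x => r x * log (r x)) := hrmeas.mul hrmeas.log
    have hint_g : Integrable (fun x => r x * log (r x)) Q := by
      refine Integrable.mono' (integrable_const (exp γ * γ)) hgmeas.aestronglyMeasurable ?_
      filter_upwards [hbounds] with x hx
      have hx1 := hx.1; have hx2 := hx.2
      have hr0 : 0 < r x := lt_of_lt_of_le (exp_pos _) hx1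
      have hlog : |log (r x)| ≤ γ := by
        rw [abs_le]
        constructor
        · calc -γ = log (exp (-γ)) := (log_exp _).symm
            _ ≤ log (r x) := log_le_log (exp_pos _) hx1
        · calc log (r x) ≤ log (exp γ) := log_le_log hr0 hx2
            _ = γ := log_exp _
      rw [Real.norm_eq_abs, abs_mul, abs_of_pos hr0]
      exact mul_le_mul hx2 hlog (abs_nonneg _) (exp_pos _).le
    have hint_h : Integrable (fun x => c + A * (r x - 1)) Q :=
      (integrable_const c).add (((hint_r.sub (integrable_const 1)).const_mul A))
    -- pointwise chord bound
    have hae : ∀ᵐ x ∂Q, r x * log (r x) ≤ c + A * (r x - 1) := by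
      filter_upwards [hbounds] with x hx
      exact chord_bound_aux γ hγ hx.1 hx.2
    have hmono := integral_mono_ae hint_g hint_h hae
    -- compute the RHS integral
    have hint1 : ∫ x, r x ∂Q = 1 := by
      rw [hr_def, Measure.integral_toReal_rnDeriv hac]
      simp
    have hsub : ∫ x, (r x - 1) ∂Q = 0 := by
      rw [integral_sub hint_r (integrable_const 1), integral_const, hint1]
      simp
    have hRHS : ∫ x, (c + A * (r x - 1)) ∂Q = c := by
      have e1 : ∫ x, (c + A * (r x - 1)) ∂Q
          = (∫ _x, c ∂Q) + ∫ x, A * (r x - 1) ∂Q :=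
        integral_add (integrable_const c) ((hint_r.sub (integrable_const 1)).const_mul A)
      have e2 : ∫ x, A * (r x - 1) ∂Q = A * ∫ x, (r x - 1) ∂Q := integral_const_mul A _
      rw [e1, e2, hsub, integral_const]
      simp
    rw [hkey]
    exact hmono.trans (le_of_eq hRHS)
  · -- tanh identity
    have hu : exp γ = exp (γ/2) * exp (γ/2) := by
      rw [← exp_add]; ring_nf
    have hu0 : (0:ℝ) < exp (γ/2) := exp_pos _
    have h1 : exp (γ/2) * exp (γ/2) + 1 ≠ 0 := by positivity
    rw [tanh_eq_sinh_div_cosh, sinh_eq, cosh_eq, exp_neg, hu]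
    field_simp
end

section
/- Let P and Q be probability measures such that e^{−γ} ≤ dP/dQ ≤ e^{γ} pointwise for some 0 ≤ γ ≤ 1, and let 1 < α ≤ 1 + 1/γ. Then D_α(P‖Q) ≤ (α/2)·(e^γ − 1)²·e^{max{0, 1−γ}} ≤ (3/2)·α·γ². -/
open MeasureTheory Real

private lemma aux_mono {F F' : ℝ → ℝ} {a b : ℝ} (hab : a ≤ b)
    (hd : ∀ x ∈ Set.Icc a b, HasDerivAt F (F' x) x)
    (h0 : ∀ x ∈ Set.Icc a b, 0 ≤ F' x) : F a ≤ F b := by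
  have hm : MonotoneOn F (Set.Icc a b) := by
    refine monotoneOn_of_deriv_nonneg (convex_Icc a b) ?_ ?_ ?_
    · exact fun x hx => (hd x hx).continuousAt.continuousWithinAt
    · intro x hx
      exact ((hd x (interior_subset hx)).differentiableAt).differentiableWithinAt
    · intro x hx
      rw [(hd x (interior_subset hx)).deriv]
      exact h0 x (interior_subset hx)
  exact hm (Set.left_mem_Icc.2 hab) (Set.right_mem_Icc.2 hab) hab

/-- Bernoulli-type: for `p ≥ 1`, `u > 0`: `u^p ≤ 1 + p (u-1) u^(p-1)`. -/
private lemma bern1 {p u : ℝ} (hp : 1 ≤ p) (hu : 0 < u) :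
    u ^ p ≤ 1 + p * (u - 1) * u ^ (p - 1) := by
  have hs : (-1 : ℝ) ≤ u⁻¹ - 1 := by
    have : (0:ℝ) < u⁻¹ := inv_pos.2 hu
    linarith
  have h := one_add_mul_self_le_rpow_one_add hs hp
  rw [add_sub_cancel] at h
  have hinv : u⁻¹ ^ p = (u ^ p)⁻¹ := Real.inv_rpow hu.le p
  rw [hinv] at h
  have hup : (0:ℝ) < u ^ p := Real.rpow_pos_of_pos hu p
  have h3 := mul_le_mul_of_nonneg_right h hup.le
  rw [inv_mul_cancel₀ hup.ne'] at h3
  have e1 : u ^ (p - 1) = u ^ p * u⁻¹ := by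
    rw [Real.rpow_sub hu, Real.rpow_one, div_eq_mul_inv]
  have e3 : p * (u - 1) * u ^ (p - 1) = p * u ^ p - p * u ^ p * u⁻¹ := by
    rw [e1]; field_simp
  rw [e3]; nlinarith [h3]

/-- Bernoulli-type: for `0 ≤ p ≤ 1`, `u > 0`: `1 + p (u-1) u^(p-1) ≤ u^p`. -/
private lemma bern2 {p u : ℝ} (hp0 : 0 ≤ p) (hp1 : p ≤ 1) (hu : 0 < u) :
    1 + p * (u - 1) * u ^ (p - 1) ≤ u ^ p := by
  have hs : (-1 : ℝ) ≤ u⁻¹ - 1 := by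
    have : (0:ℝ) < u⁻¹ := inv_pos.2 hu
    linarith
  have h := rpow_one_add_le_one_add_mul_self hs hp0 hp1
  rw [add_sub_cancel] at h
  have hinv : u⁻¹ ^ p = (u ^ p)⁻¹ := Real.inv_rpow hu.le p
  rw [hinv] at h
  have hup : (0:ℝ) < u ^ p := Real.rpow_pos_of_pos hu p
  have h3 := mul_le_mul_of_nonneg_right h hup.le
  rw [inv_mul_cancel₀ hup.ne'] at h3
  have e1 : u ^ (p - 1) = u ^ p * u⁻¹ := by
    rw [Real.rpow_sub hu, Real.rpow_one, div_eq_mul_inv]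
  have e3 : p * (u - 1) * u ^ (p - 1) = p * u ^ p - p * u ^ p * u⁻¹ := by
    rw [e1]; field_simp
  rw [e3]; nlinarith [h3]

private lemma tayA1 {α u : ℝ} (hα2 : 2 ≤ α) (hu : 1 ≤ u) :
    u ^ α ≤ 1 + α * (u - 1) + α * (α - 1) / 2 * ((u - 1) ^ 2 * u ^ (α - 2)) := by
  have key := aux_mono (a := 1) (b := u)
    (F := fun x : ℝ => 1 + α * (x - 1) + α * (α - 1) / 2 * ((x - 1) ^ 2 * x ^ (α - 2)) - x ^ α)
    (F' := fun x : ℝ => α + α * (α - 1) / 2 *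
      (2 * (x - 1) * x ^ (α - 2) + (x - 1) ^ 2 * ((α - 2) * x ^ (α - 2 - 1))) - α * x ^ (α - 1))
    hu ?_ ?_
  · simp only [Real.one_rpow] at key
    norm_num at key
    linarith
  · intro x hx
    have hx0 : 0 < x := lt_of_lt_of_le one_pos hx.1
    have d1 : HasDerivAt (fun y : ℝ => y ^ (α - 2)) ((α - 2) * x ^ (α - 2 - 1)) x :=
      Real.hasDerivAt_rpow_const (Or.inl hx0.ne')
    have d2 : HasDerivAt (fun y : ℝ => (y - 1) ^ 2) (2 * (x - 1)) x := by
      simpa using ((hasDerivAt_id x).sub_const 1).fun_pow 2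
    have d4 : HasDerivAt (fun y : ℝ => y ^ α) (α * x ^ (α - 1)) x :=
      Real.hasDerivAt_rpow_const (Or.inl hx0.ne')
    have dF := (((hasDerivAt_const x (1:ℝ)).add
      (((hasDerivAt_id x).sub_const 1).const_mul α)).add
      ((d2.mul d1).const_mul (α * (α - 1) / 2))).sub d4
    exact dF.congr_deriv (by beta_reduce; ring)
  · intro x hx
    have hx0 : 0 < x := lt_of_lt_of_le one_pos hx.1
    have hb := bern1 (p := α - 1) (by linarith) hx0
    have he : α - 1 - 1 = α - 2 := by ring
    rw [he] at hb
    have hC : (0:ℝ) ≤ x ^ (α - 2 - 1) := (Real.rpow_pos_of_pos hx0 _).le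
    have h1 := mul_le_mul_of_nonneg_left hb (by linarith : (0:ℝ) ≤ α)
    have hc0 : (0:ℝ) ≤ α * (α - 1) / 2 := by nlinarith
    have hterm : (0:ℝ) ≤ (x - 1) ^ 2 * ((α - 2) * x ^ (α - 2 - 1)) :=
      mul_nonneg (sq_nonneg _) (mul_nonneg (by linarith) hC)
    have h2 := mul_nonneg hc0 hterm
    nlinarith [h1, h2]

private lemma tayB1 {α u : ℝ} (hα1 : 1 ≤ α) (hα2 : α ≤ 2) (hu : 1 ≤ u) :
    u ^ α ≤ 1 + α * (u - 1) + α * (α - 1) / 2 * (u - 1) ^ 2 := by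
  have key := aux_mono (a := 1) (b := u)
    (F := fun x : ℝ => 1 + α * (x - 1) + α * (α - 1) / 2 * (x - 1) ^ 2 - x ^ α)
    (F' := fun x : ℝ => α + α * (α - 1) / 2 * (2 * (x - 1)) - α * x ^ (α - 1))
    hu ?_ ?_
  · simp only [Real.one_rpow] at key
    norm_num at key
    linarith
  · intro x hx
    have hx0 : 0 < x := lt_of_lt_of_le one_pos hx.1
    have d2 : HasDerivAt (fun y : ℝ => (y - 1) ^ 2) (2 * (x - 1)) x := by
      simpa using ((hasDerivAt_id x).sub_const 1).fun_pow 2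
    have d4 : HasDerivAt (fun y : ℝ => y ^ α) (α * x ^ (α - 1)) x :=
      Real.hasDerivAt_rpow_const (Or.inl hx0.ne')
    have dF := (((hasDerivAt_const x (1:ℝ)).add
      (((hasDerivAt_id x).sub_const 1).const_mul α)).add
      (d2.const_mul (α * (α - 1) / 2))).sub d4
    exact dF.congr_deriv (by beta_reduce; ring)
  · intro x hx
    have hx0 : 0 < x := lt_of_lt_of_le one_pos hx.1
    have hb := rpow_one_add_le_one_add_mul_self (s := x - 1) (by linarith)
      (p := α - 1) (by linarith) (by linarith)
    have he : (1 : ℝ) + (x - 1) = x := by ring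
    rw [he] at hb
    have h1 := mul_le_mul_of_nonneg_left hb (by linarith : (0:ℝ) ≤ α)
    nlinarith [h1]

private lemma tayB2 {α u : ℝ} (hα2 : 2 ≤ α) (hu0 : 0 < u) (hu : u ≤ 1) :
    u ^ α ≤ 1 + α * (u - 1) + α * (α - 1) / 2 * (u - 1) ^ 2 := by
  have key := aux_mono (a := u) (b := 1)
    (F := fun x : ℝ => x ^ α - (1 + α * (x - 1) + α * (α - 1) / 2 * (x - 1) ^ 2))
    (F' := fun x : ℝ => α * x ^ (α - 1) - (α + α * (α - 1) / 2 * (2 * (x - 1))))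
    hu ?_ ?_
  · simp only [Real.one_rpow] at key
    norm_num at key
    linarith
  · intro x hx
    have hx0 : 0 < x := lt_of_lt_of_le hu0 hx.1
    have d2 : HasDerivAt (fun y : ℝ => (y - 1) ^ 2) (2 * (x - 1)) x := by
      simpa using ((hasDerivAt_id x).sub_const 1).fun_pow 2
    have d4 : HasDerivAt (fun y : ℝ => y ^ α) (α * x ^ (α - 1)) x :=
      Real.hasDerivAt_rpow_const (Or.inl hx0.ne')
    have dF := d4.sub (((hasDerivAt_const x (1:ℝ)).add
      (((hasDerivAt_id x).sub_const 1).const_mul α)).add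
      (d2.const_mul (α * (α - 1) / 2)))
    exact dF.congr_deriv (by beta_reduce; ring)
  · intro x hx
    have hx0 : 0 < x := lt_of_lt_of_le hu0 hx.1
    have hb := one_add_mul_self_le_rpow_one_add (s := x - 1) (by linarith)
      (p := α - 1) (by linarith)
    have he : (1 : ℝ) + (x - 1) = x := by ring
    rw [he] at hb
    have h1 := mul_le_mul_of_nonneg_left hb (by linarith : (0:ℝ) ≤ α)
    nlinarith [h1]

private lemma tayA2 {α u : ℝ} (hα1 : 1 < α) (hα2 : α ≤ 2) (hu0 : 0 < u) (hu : u ≤ 1) :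
    u ^ α ≤ 1 + α * (u - 1) + α * (α - 1) / 2 * ((u - 1) ^ 2 * u ^ (α - 2)) := by
  have key := aux_mono (a := u) (b := 1)
    (F := fun x : ℝ => x ^ α -
      (1 + α * (x - 1) + α * (α - 1) / 2 * ((x - 1) ^ 2 * x ^ (α - 2))))
    (F' := fun x : ℝ => α * x ^ (α - 1) - (α + α * (α - 1) / 2 *
      (2 * (x - 1) * x ^ (α - 2) + (x - 1) ^ 2 * ((α - 2) * x ^ (α - 2 - 1)))))
    hu ?_ ?_
  · simp only [Real.one_rpow] at key
    norm_num at key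
    linarith
  · intro x hx
    have hx0 : 0 < x := lt_of_lt_of_le hu0 hx.1
    have d1 : HasDerivAt (fun y : ℝ => y ^ (α - 2)) ((α - 2) * x ^ (α - 2 - 1)) x :=
      Real.hasDerivAt_rpow_const (Or.inl hx0.ne')
    have d2 : HasDerivAt (fun y : ℝ => (y - 1) ^ 2) (2 * (x - 1)) x := by
      simpa using ((hasDerivAt_id x).sub_const 1).fun_pow 2
    have d4 : HasDerivAt (fun y : ℝ => y ^ α) (α * x ^ (α - 1)) x :=
      Real.hasDerivAt_rpow_const (Or.inl hx0.ne')
    have dF := d4.sub (((hasDerivAt_const x (1:ℝ)).add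
      (((hasDerivAt_id x).sub_const 1).const_mul α)).add
      ((d2.mul d1).const_mul (α * (α - 1) / 2)))
    exact dF.congr_deriv (by beta_reduce; ring)
  · intro x hx
    have hx0 : 0 < x := lt_of_lt_of_le hu0 hx.1
    have hb := bern2 (p := α - 1) (by linarith) (by linarith) hx0
    have he : α - 1 - 1 = α - 2 := by ring
    rw [he] at hb
    have hC : (0:ℝ) ≤ x ^ (α - 2 - 1) := (Real.rpow_pos_of_pos hx0 _).le
    have h1 := mul_le_mul_of_nonneg_left hb (by linarith : (0:ℝ) ≤ α)
    have hc0 : (0:ℝ) ≤ α * (α - 1) / 2 := by nlinarith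
    have hterm : (0:ℝ) ≤ (x - 1) ^ 2 * ((2 - α) * x ^ (α - 2 - 1)) :=
      mul_nonneg (sq_nonneg _) (mul_nonneg (by linarith) hC)
    have h2 := mul_nonneg hc0 hterm
    nlinarith [h1, h2]

private lemma key_taylor {α u : ℝ} (hα : 1 < α) (hu : 0 < u) :
    u ^ α ≤ 1 + α * (u - 1) + α * (α - 1) / 2 * ((u - 1) ^ 2 * max (u ^ (α - 2)) 1) := by
  have hc : (0:ℝ) ≤ α * (α - 1) / 2 := by nlinarith
  have hsq : (0:ℝ) ≤ (u - 1) ^ 2 := sq_nonneg _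
  rcases le_total 1 u with h1 | h1
  · rcases le_total 2 α with h2 | h2
    · have h := tayA1 h2 h1
      have hle : (u - 1) ^ 2 * u ^ (α - 2) ≤ (u - 1) ^ 2 * max (u ^ (α - 2)) 1 :=
        mul_le_mul_of_nonneg_left (le_max_left _ _) hsq
      nlinarith [mul_le_mul_of_nonneg_left hle hc]
    · have h := tayB1 hα.le h2 h1
      have hle : (u - 1) ^ 2 * 1 ≤ (u - 1) ^ 2 * max (u ^ (α - 2)) 1 :=
        mul_le_mul_of_nonneg_left (le_max_right _ _) hsq
      nlinarith [mul_le_mul_of_nonneg_left hle hc]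
  · rcases le_total 2 α with h2 | h2
    · have h := tayB2 h2 hu h1
      have hle : (u - 1) ^ 2 * 1 ≤ (u - 1) ^ 2 * max (u ^ (α - 2)) 1 :=
        mul_le_mul_of_nonneg_left (le_max_right _ _) hsq
      nlinarith [mul_le_mul_of_nonneg_left hle hc]
    · have h := tayA2 hα h2 hu h1
      have hle : (u - 1) ^ 2 * u ^ (α - 2) ≤ (u - 1) ^ 2 * max (u ^ (α - 2)) 1 :=
        mul_le_mul_of_nonneg_left (le_max_left _ _) hsq
      nlinarith [mul_le_mul_of_nonneg_left hle hc]

private lemma interval_bound {α γ u : ℝ} (hγ1 : γ ≤ 1) (hα : 1 < α)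
    (hαγ : (α - 1) * γ ≤ 1) (hγ0 : 0 ≤ γ) (hl : exp (-γ) ≤ u) (hr : u ≤ exp γ) :
    (u - 1) ^ 2 * max (u ^ (α - 2)) 1 ≤ (exp γ - 1) ^ 2 * exp (max 0 (1 - γ)) := by
  have hu0 : 0 < u := lt_of_lt_of_le (exp_pos _) hl
  have hmax1 : (1:ℝ) ≤ exp (max 0 (1 - γ)) := Real.one_le_exp (le_max_left _ _)
  have hprod : exp γ * exp (-γ) = 1 := by rw [← exp_add]; simp
  have h2 : (2:ℝ) ≤ exp γ + exp (-γ) := by nlinarith [sq_nonneg (exp γ - 1), exp_pos γ]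
  have hsq : (u - 1) ^ 2 ≤ (exp γ - 1) ^ 2 :=
    sq_le_sq' (by linarith) (by linarith)
  have hsqγ : (0:ℝ) ≤ (exp γ - 1) ^ 2 := sq_nonneg _
  rcases le_total (u ^ (α - 2)) 1 with hm | hm
  · rw [max_eq_right hm]
    calc (u - 1) ^ 2 * 1 ≤ (exp γ - 1) ^ 2 * 1 := by linarith
    _ ≤ (exp γ - 1) ^ 2 * exp (max 0 (1 - γ)) := by
        exact mul_le_mul_of_nonneg_left hmax1 hsqγ
  · rw [max_eq_left hm]
    rcases le_total 2 α with h2α | h2α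
    · have hub : u ^ (α - 2) ≤ (exp γ) ^ (α - 2) :=
        Real.rpow_le_rpow hu0.le hr (by linarith)
      have he : (exp γ) ^ (α - 2) = exp (γ * (α - 2)) := (Real.exp_mul γ (α - 2)).symm
      have hle : γ * (α - 2) ≤ max 0 (1 - γ) := by
        have : γ * (α - 2) ≤ 1 - γ := by nlinarith
        exact le_trans this (le_max_right _ _)
      have : u ^ (α - 2) ≤ exp (max 0 (1 - γ)) := by
        rw [he] at hub
        exact hub.trans (exp_le_exp.2 hle)
      exact mul_le_mul hsq this (Real.rpow_nonneg hu0.le _) hsqγ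
    · rcases le_total 1 u with hu1 | hu1
      · have : u ^ (α - 2) ≤ 1 := Real.rpow_le_one_of_one_le_of_nonpos hu1 (by linarith)
        exact mul_le_mul hsq (this.trans hmax1) (Real.rpow_nonneg hu0.le _) hsqγ
      · -- u ≤ 1, α ≤ 2
        have hub : u ^ (α - 2) ≤ (exp (-γ)) ^ (α - 2) :=
          Real.rpow_le_rpow_of_nonpos (exp_pos _) hl (by linarith)
        have he : (exp (-γ)) ^ (α - 2) = exp (-γ * (α - 2)) := (Real.exp_mul (-γ) (α - 2)).symm
        have hsqu : (u - 1) ^ 2 ≤ (1 - exp (-γ)) ^ 2 := by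
          have h1 : exp (-γ) ≤ 1 := Real.exp_le_one_iff.2 (by linarith)
          exact sq_le_sq' (by linarith) (by linarith)
        have step : (u - 1) ^ 2 * u ^ (α - 2) ≤ (1 - exp (-γ)) ^ 2 * exp (-γ * (α - 2)) := by
          rw [← he]
          exact mul_le_mul hsqu hub (Real.rpow_nonneg hu0.le _) (sq_nonneg _)
        refine step.trans ?_
        have key : (1 - exp (-γ)) ^ 2 * exp (-γ * (α - 2)) ≤ (exp γ - 1) ^ 2 := by
          have e1 : exp (-γ * (α - 2)) = exp γ * exp γ * exp (-(α * γ)) := by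
            rw [← exp_add, ← exp_add]; ring_nf
          have e2 : exp (-(α * γ)) ≤ 1 := Real.exp_le_one_iff.2 (by nlinarith)
          have e3 : (1 - exp (-γ)) * exp γ = exp γ - 1 := by
            rw [sub_mul, one_mul]; nlinarith [hprod]
          rw [e1]
          calc (1 - exp (-γ)) ^ 2 * (exp γ * exp γ * exp (-(α * γ)))
              = ((1 - exp (-γ)) * exp γ) ^ 2 * exp (-(α * γ)) := by ring
            _ = (exp γ - 1) ^ 2 * exp (-(α * γ)) := by rw [e3]
            _ ≤ (exp γ - 1) ^ 2 * 1 := mul_le_mul_of_nonneg_left e2 hsqγ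
            _ = (exp γ - 1) ^ 2 := mul_one _
        exact key.trans (le_mul_of_one_le_right hsqγ hmax1)

private lemma numeric_bound {γ : ℝ} (hγ0 : 0 ≤ γ) (hγ1 : γ ≤ 1) :
    (exp γ - 1) ^ 2 * exp (max 0 (1 - γ)) ≤ 3 * γ ^ 2 := by
  rw [max_eq_right (by linarith : (0:ℝ) ≤ 1 - γ)]
  have hprod : exp γ * exp (-γ) = 1 := by rw [← exp_add]; simp
  have hsplit : exp (1 - γ) = exp 1 * exp (-γ) := by rw [← exp_add]; ring_nf
  have hident : (exp γ - 1) ^ 2 * (exp 1 * exp (-γ)) =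
      exp 1 * (exp γ + exp (-γ) - 2) := by linear_combination (exp 1 * (exp γ - 2)) * hprod
  rw [hsplit, hident]
  -- Taylor bounds on exp
  have habs : |γ| ≤ 1 := by rw [abs_of_nonneg hγ0]; exact hγ1
  have habs' : |(-γ)| ≤ 1 := by rwa [abs_neg]
  have hb1 := Real.exp_bound habs (by norm_num : 0 < 6)
  have hb2 := Real.exp_bound habs' (by norm_num : 0 < 6)
  rw [abs_of_nonneg hγ0] at hb1
  rw [abs_neg, abs_of_nonneg hγ0] at hb2
  simp only [Finset.sum_range_succ, Finset.sum_range_zero, Nat.factorial] at hb1 hb2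
  norm_num at hb1 hb2
  rw [abs_sub_le_iff] at hb1 hb2
  have h1 := hb1.1
  have h2 := hb2.1
  have hγ2 : γ ^ 2 ≤ 1 := by nlinarith
  have h4 : γ ^ 4 ≤ γ ^ 2 := by nlinarith [sq_nonneg γ]
  have h6 : γ ^ 6 ≤ γ ^ 2 := by nlinarith [sq_nonneg γ, sq_nonneg (γ^2)]
  have hT : exp γ + exp (-γ) - 2 ≤ γ^2 + γ^4/12 + 7*γ^6/2160 := by nlinarith [h1, h2]
  have hT0 : (0:ℝ) ≤ exp γ + exp (-γ) - 2 := by nlinarith [sq_nonneg (exp γ - 1), exp_pos γ]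
  have he1 : exp 1 < 2.7182818286 := Real.exp_one_lt_d9
  have hmul : exp 1 * (exp γ + exp (-γ) - 2) ≤
      2.7182818286 * (γ^2 + γ^4/12 + 7*γ^6/2160) :=
    mul_le_mul he1.le hT hT0 (by norm_num)
  nlinarith [hmul, h4, h6]

/-- If e^{−γ} ≤ dP/dQ ≤ e^{γ} with 0 ≤ γ ≤ 1 and 1 < α ≤ 1 + 1/γ, then
`D_α(P‖Q) ≤ (α/2)(e^γ−1)² e^{max{0,1−γ}} ≤ (3/2)αγ²`. -/
theorem renyiDiv_quadratic_bound {Ω : Type*} [MeasurableSpace Ω]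
    (P Q : Measure Ω) [IsProbabilityMeasure P] [IsProbabilityMeasure Q]
    (γ α : ℝ) (hγ0 : 0 ≤ γ) (hγ1 : γ ≤ 1) (hα : 1 < α) (hαγ : (α - 1) * γ ≤ 1)
    (hlb : ∀ x, exp (-γ) ≤ (P.rnDeriv Q x).toReal)
    (hub : ∀ x, (P.rnDeriv Q x).toReal ≤ exp γ) :
    (α - 1)⁻¹ * log (∫ x, ((P.rnDeriv Q x).toReal) ^ α ∂Q) ≤
        α / 2 * (exp γ - 1) ^ 2 * exp (max 0 (1 - γ)) ∧
      α / 2 * (exp γ - 1) ^ 2 * exp (max 0 (1 - γ)) ≤ 3 / 2 * α * γ ^ 2 := by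
  set f : Ω → ℝ := fun x => (P.rnDeriv Q x).toReal with hf
  have hf_meas : Measurable f := (Measure.measurable_rnDeriv P Q).ennreal_toReal
  have hα0 : (0:ℝ) < α := lt_trans zero_lt_one hα
  have hf0 : ∀ x, 0 ≤ f x := fun x => ENNReal.toReal_nonneg
  set C : ℝ := (exp γ - 1) ^ 2 * exp (max 0 (1 - γ)) with hCdef
  have hC0 : 0 ≤ C := mul_nonneg (sq_nonneg _) (exp_pos _).le
  have hc : (0:ℝ) ≤ α * (α - 1) / 2 := by nlinarith
  have hpt : ∀ x, f x ^ α ≤ (1 + α * (α - 1) / 2 * C - α) + α * f x := by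
    intro x
    have hx0 : 0 < f x := lt_of_lt_of_le (exp_pos _) (hlb x)
    have h1 := key_taylor hα hx0
    have h2 := interval_bound hγ1 hα hαγ hγ0 (hlb x) (hub x)
    nlinarith [mul_le_mul_of_nonneg_left h2 hc]
  have hint_f : Integrable f Q := by
    refine ⟨hf_meas.aestronglyMeasurable, ?_⟩
    apply HasFiniteIntegral.of_bounded (C := exp γ)
    filter_upwards with x
    rw [Real.norm_eq_abs, abs_of_nonneg (hf0 x)]
    exact hub x
  have hg_meas : Measurable (fun x => f x ^ α) :=
    (Real.continuous_rpow_const hα0.le).measurable.comp hf_meas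
  have hint_g : Integrable (fun x => f x ^ α) Q := by
    refine ⟨hg_meas.aestronglyMeasurable, ?_⟩
    apply HasFiniteIntegral.of_bounded (C := exp γ ^ α)
    filter_upwards with x
    rw [Real.norm_eq_abs, abs_of_nonneg (Real.rpow_nonneg (hf0 x) α)]
    exact Real.rpow_le_rpow (hf0 x) (hub x) hα0.le
  have hile : ∫ x, f x ∂Q ≤ 1 := by
    have h := Measure.setIntegral_toReal_rnDeriv_le (μ := P) (ν := Q) (s := Set.univ)
      (measure_ne_top P _)
    simpa [Measure.restrict_univ, measure_univ] using h
  have hint_h : Integrable (fun x => (1 + α * (α - 1) / 2 * C - α) + α * f x) Q :=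
    (integrable_const _).add (hint_f.const_mul α)
  have hI : ∫ x, f x ^ α ∂Q ≤ 1 + α * (α - 1) / 2 * C := by
    have hle := integral_mono hint_g hint_h hpt
    rw [integral_add (integrable_const _) (hint_f.const_mul α), integral_const,
      integral_const_mul, probReal_univ] at hle
    simp only [ENNReal.toReal_one, smul_eq_mul, one_mul] at hle
    nlinarith [mul_le_mul_of_nonneg_left hile hα0.le]
  have hIpos : 0 < ∫ x, f x ^ α ∂Q := by
    have hlow : ∀ x, exp (-γ * α) ≤ f x ^ α := by
      intro x
      have := Real.rpow_le_rpow (exp_pos (-γ)).le (hlb x) hα0.le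
      rwa [← Real.exp_mul] at this
    calc (0:ℝ) < exp (-γ * α) := exp_pos _
      _ = ∫ _x, exp (-γ * α) ∂Q := by rw [integral_const, probReal_univ]; simp
      _ ≤ ∫ x, f x ^ α ∂Q := integral_mono (integrable_const _) hint_g hlow
  have hlog : log (∫ x, f x ^ α ∂Q) ≤ α * (α - 1) / 2 * C := by
    have := Real.log_le_sub_one_of_pos hIpos
    linarith
  constructor
  · have hαinv : (0:ℝ) ≤ (α - 1)⁻¹ := (inv_pos.2 (by linarith)).le
    have step := mul_le_mul_of_nonneg_left hlog hαinv
    have hne : α - 1 ≠ 0 := ne_of_gt (by linarith)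
    have heq : (α - 1)⁻¹ * (α * (α - 1) / 2 * C) = α / 2 * C := by
      rw [show α * (α - 1) / 2 * C = (α - 1) * (α / 2 * C) by ring, ← mul_assoc,
        inv_mul_cancel₀ hne, one_mul]
    rw [heq, hCdef, ← mul_assoc] at step
    exact step
  · have h := numeric_bound hγ0 hγ1
    nlinarith [mul_le_mul_of_nonneg_left h (by linarith : (0:ℝ) ≤ α / 2)]
end

section
/- Let P and Q be probability measures such that e^{−γ} ≤ dP/dQ ≤ e^{γ} pointwise for some γ ≥ 0, and let α > 1. Then D_α(P‖Q) ≤ min{γ, (3/2)·α·γ²}. -/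
open MeasureTheory Real

private lemma exp_le_of_pow' {x B : ℝ} (n : ℕ) (hn : 0 < n) (hB : 0 ≤ B)
    (h : Real.exp (n * x) ≤ B ^ n) : Real.exp x ≤ B :=
  le_of_pow_le_pow_left₀ hn.ne' hB (by rwa [← Real.exp_nat_mul])

private lemma exp_43' : Real.exp (4/3) ≤ 19/5 := by
  refine exp_le_of_pow' 3 (by norm_num) (by norm_num) ?_
  have h4 : ((3:ℕ) : ℝ) * (4/3 : ℝ) = ((4:ℕ) : ℝ) * 1 := by norm_num
  rw [h4, Real.exp_nat_mul]
  calc Real.exp 1 ^ 4 ≤ 2.7182818286 ^ 4 :=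
        pow_le_pow_left₀ (Real.exp_pos 1).le Real.exp_one_lt_d9.le 4
    _ ≤ (19/5 : ℝ) ^ 3 := by norm_num

private lemma exp_23' : Real.exp (2/3) ≤ 2 := by
  refine exp_le_of_pow' 3 (by norm_num) (by norm_num) ?_
  have h4 : ((3:ℕ) : ℝ) * (2/3 : ℝ) = ((2:ℕ) : ℝ) * 1 := by norm_num
  rw [h4, Real.exp_nat_mul]
  calc Real.exp 1 ^ 2 ≤ 2.7182818286 ^ 2 :=
        pow_le_pow_left₀ (Real.exp_pos 1).le Real.exp_one_lt_d9.le 2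
    _ ≤ (2 : ℝ) ^ 3 := by norm_num

private lemma taylor5' {x : ℝ} (h0 : 0 ≤ x) (h1 : x ≤ 1) :
    1 - x + x^2/2 - x^3/6 + x^4/24 - x^5/100 ≤ Real.exp (-x) := by
  have habs : |(-x)| = x := by rw [abs_neg, abs_of_nonneg h0]
  have h := Real.exp_bound (x := -x) (by rwa [habs]) (n := 5) (by norm_num)
  rw [habs] at h
  have hs : (∑ m ∈ Finset.range 5, (-x) ^ m / (m.factorial : ℝ))
      = 1 - x + x^2/2 - x^3/6 + x^4/24 := by
    simp [Finset.sum_range_succ, Nat.factorial]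
    ring
  rw [hs] at h
  have h2 := (abs_le.mp h).1
  norm_num [Nat.factorial] at h2
  linarith

private lemma taylor3_abs' {y c : ℝ} (hy : |y| ≤ c) (hc : c ≤ 1) :
    Real.exp y ≤ 1 + y + (1/2 + (2/9)*c) * y^2 := by
  have h := Real.exp_bound (x := y) (hy.trans hc) (n := 3) (by norm_num)
  have hs : (∑ m ∈ Finset.range 3, y ^ m / (m.factorial : ℝ)) = 1 + y + y^2/2 := by
    simp [Finset.sum_range_succ, Nat.factorial]
  rw [hs] at h
  have h2 := (abs_le.mp h).2
  norm_num [Nat.factorial] at h2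
  have h3 : |y|^3 ≤ c * y^2 := by
    have : |y|^3 = |y| * y^2 := by rw [pow_succ, sq_abs]; ring
    rw [this]
    nlinarith [abs_nonneg y, sq_nonneg y]
  nlinarith

private lemma mul_log_sq_le' {z : ℝ} (hz : 0 < z) : z * Real.log z ^ 2 ≤ (z - 1)^2 := by
  have key : ∀ w : ℝ, 1 ≤ w → w * Real.log w ^ 2 ≤ (w - 1)^2 := by
    intro w hw
    have hw0 : 0 < w := by linarith
    have hs0 : 0 < Real.sqrt w := Real.sqrt_pos.2 hw0
    have hsq : Real.sqrt w ^ 2 = w := Real.sq_sqrt hw0.le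
    have hs1 : 1 ≤ Real.sqrt w := by nlinarith [hs0]
    have hlog : Real.log w = 2 * Real.log (Real.sqrt w) := by
      rw [Real.log_sqrt hw0.le]; ring
    have h1 : Real.log (Real.sqrt w) ≤ Real.sqrt w - 1 :=
      Real.log_le_sub_one_of_pos hs0
    have h2 : Real.sqrt w * Real.log w ≤ w - 1 := by
      set v := Real.log (Real.sqrt w) with hv
      have hv0 : 0 ≤ v := Real.log_nonneg hs1
      have hev : Real.exp v = Real.sqrt w := Real.exp_log hs0
      have hSpos : 0 < 1 + v + v^2/2 := by positivity
      have hS : 1 + v + v^2/2 ≤ Real.exp v := Real.quadratic_le_exp_of_nonneg hv0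
      have hsinh : 2*v ≤ Real.exp v - Real.exp (-v) := by
        have hinv : Real.exp (-v) ≤ (1 + v + v^2/2)⁻¹ := by
          rw [Real.exp_neg]
          exact inv_anti₀ hSpos hS
        have hkey : (1 + v + v^2/2) - (1 + v + v^2/2)⁻¹ - 2*v = (v^4/4) / (1 + v + v^2/2) := by
          field_simp
          ring
        have hpos : 0 ≤ (v^4/4) / (1 + v + v^2/2) := by positivity
        linarith
      rw [hev, Real.exp_neg, hev] at hsinh
      have hww : Real.sqrt w * Real.sqrt w = w := Real.mul_self_sqrt hw0.le
      have hinv1 : Real.sqrt w * (Real.sqrt w)⁻¹ = 1 := mul_inv_cancel₀ hs0.ne'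
      have := mul_le_mul_of_nonneg_left hsinh hs0.le
      rw [hlog]
      nlinarith [this, hww, hinv1]
    have h0 : 0 ≤ Real.sqrt w * Real.log w :=
      mul_nonneg hs0.le (Real.log_nonneg hw)
    have := sq_le_sq' (by linarith : -(w-1) ≤ Real.sqrt w * Real.log w) h2
    calc w * Real.log w ^ 2 = (Real.sqrt w * Real.log w)^2 := by
          rw [mul_pow, hsq]
      _ ≤ (w - 1)^2 := this
  rcases le_or_gt 1 z with hz1 | hz1
  · exact key z hz1
  · have hinv : 1 ≤ z⁻¹ := (one_le_inv₀ hz).2 hz1.le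
    have h := key z⁻¹ hinv
    rw [Real.log_inv] at h
    have h2 := mul_le_mul_of_nonneg_left h (sq_nonneg z)
    have e1 : z^2 * (z⁻¹ * (-Real.log z) ^ 2) = z * Real.log z ^ 2 := by
      field_simp
    have e2 : z^2 * (z⁻¹ - 1)^2 = (z - 1)^2 := by
      field_simp; ring
    rw [e1, e2] at h2
    exact h2

private lemma chord_mul_log' {a b z : ℝ} (ha : 0 < a) (hab : a < b) (hz1 : a ≤ z) (hz2 : z ≤ b) :
    z * Real.log z ≤ ((b - z) * (a * Real.log a) + (z - a) * (b * Real.log b)) / (b - a) := by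
  have hba : (0:ℝ) < b - a := by linarith
  set θ := (b - z)/(b - a) with hθ
  have hθ0 : 0 ≤ θ := div_nonneg (by linarith) hba.le
  have hθ1 : 0 ≤ 1 - θ := by
    rw [hθ, sub_nonneg]
    exact div_le_one_of_le₀ (by linarith) hba.le
  have hzθ : θ • a + (1-θ) • b = z := by
    simp only [smul_eq_mul, hθ]
    field_simp
    ring
  have hcvx := Real.convexOn_mul_log.2 (Set.mem_Ici.2 ha.le)
      (Set.mem_Ici.2 (by linarith : (0:ℝ) ≤ b)) hθ0 hθ1 (by ring)
  rw [hzθ] at hcvx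
  simp only [smul_eq_mul] at hcvx
  have heq : θ * (a * Real.log a) + (1-θ) * (b * Real.log b)
      = ((b - z) * (a * Real.log a) + (z - a) * (b * Real.log b)) / (b - a) := by
    rw [hθ]
    field_simp
    ring
  rw [heq] at hcvx
  exact hcvx

set_option maxHeartbeats 8000000

/-- If e^{−γ} ≤ dP/dQ ≤ e^{γ} pointwise with γ ≥ 0 and α > 1, then
`D_α(P‖Q) ≤ min{γ, (3/2)αγ²}`. -/
theorem renyiDiv_le_min {Ω : Type*} [MeasurableSpace Ω]
    (P Q : Measure Ω) [IsProbabilityMeasure P] [IsProbabilityMeasure Q]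
    (γ α : ℝ) (hγ : 0 ≤ γ) (hα : 1 < α)
    (hlb : ∀ x, exp (-γ) ≤ (P.rnDeriv Q x).toReal)
    (hub : ∀ x, (P.rnDeriv Q x).toReal ≤ exp γ) :
    (α - 1)⁻¹ * log (∫ x, ((P.rnDeriv Q x).toReal) ^ α ∂Q) ≤
      min γ (3 / 2 * α * γ ^ 2) := by
  set f : Ω → ℝ := fun x => (P.rnDeriv Q x).toReal with hfdef
  have hmf : Measurable f := (Measure.measurable_rnDeriv P Q).ennreal_toReal
  have hfpos : ∀ x, 0 < f x := fun x => lt_of_lt_of_le (exp_pos _) (hlb x)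
  have hα1 : (0:ℝ) < α - 1 := by linarith
  have hα0 : (0:ℝ) ≤ α := by linarith
  -- trivial case γ = 0
  rcases eq_or_lt_of_le hγ with hγ0 | hγpos
  · have hf1 : ∀ x, f x = 1 := by
      intro x
      have h1 := hlb x
      have h2 := hub x
      rw [← hγ0] at h1 h2
      simp only [neg_zero, Real.exp_zero] at h1 h2
      exact le_antisymm h2 h1
    have : (fun x => f x ^ α) = fun _ : Ω => (1:ℝ) := by
      funext x; rw [hf1 x, Real.one_rpow]
    rw [show (∫ x, f x ^ α ∂Q) = ∫ _x, (1:ℝ) ∂Q from by rw [this]]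
    rw [integral_const]
    simp [← hγ0]
  -- basic bounds
  have hL : ∀ x, |Real.log (f x)| ≤ γ := by
    intro x
    rw [abs_le]
    constructor
    · have := Real.log_le_log (exp_pos (-γ)) (hlb x)
      rwa [Real.log_exp] at this
    · have := Real.log_le_log (hfpos x) (hub x)
      rwa [Real.log_exp] at this
  -- integrability
  have hbnd : ∀ (g : Ω → ℝ), Measurable g → ∀ C : ℝ, (∀ x, ‖g x‖ ≤ C) → Integrable g Q :=
    fun g hg C hC => (integrable_const C).mono' hg.aestronglyMeasurable (ae_of_all _ hC)
  have hIf : Integrable f Q := by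
    refine hbnd f hmf (Real.exp γ) fun x => ?_
    rw [Real.norm_eq_abs, abs_of_pos (hfpos x)]
    exact hub x
  have hIα : Integrable (fun x => f x ^ α) Q := by
    refine hbnd _ ((Real.continuous_rpow_const hα0).measurable.comp hmf) (Real.exp (γ*α))
      fun x => ?_
    rw [Real.norm_eq_abs, abs_of_nonneg (Real.rpow_nonneg (hfpos x).le α)]
    calc f x ^ α ≤ Real.exp γ ^ α := Real.rpow_le_rpow (hfpos x).le (hub x) hα0
      _ = Real.exp (γ*α) := (Real.exp_mul γ α).symm
  have hIg1 : Integrable (fun x => f x * Real.log (f x)) Q := by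
    refine hbnd _ (hmf.mul (Real.measurable_log.comp hmf)) (Real.exp γ * γ) fun x => ?_
    rw [Real.norm_eq_abs, abs_mul, abs_of_pos (hfpos x)]
    exact mul_le_mul (hub x) (hL x) (abs_nonneg _) (exp_pos _).le
  have hIg2 : Integrable (fun x => f x * Real.log (f x) ^ 2) Q := by
    refine hbnd _ (hmf.mul ((Real.measurable_log.comp hmf).pow_const 2)) (Real.exp γ * γ^2)
      fun x => ?_
    rw [Real.norm_eq_abs, abs_mul, abs_of_pos (hfpos x)]
    refine mul_le_mul (hub x) ?_ (abs_nonneg _) (exp_pos _).le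
    rw [abs_pow]
    exact pow_le_pow_left₀ (abs_nonneg _) (hL x) 2
  -- mass bound
  have hm1 : ∫ x, f x ∂Q ≤ 1 := by
    have h := Measure.setIntegral_toReal_rnDeriv_le (μ := P) (ν := Q) (s := Set.univ)
      (measure_ne_top P _)
    rw [setIntegral_univ] at h
    simpa using h
  have hm0 : 0 ≤ ∫ x, f x ∂Q := integral_nonneg fun x => (hfpos x).le
  -- positivity of the integral
  have hIpos : 0 < ∫ x, f x ^ α ∂Q := by
    have hpt : ∀ x, Real.exp (-γ*α) ≤ f x ^ α := by
      intro x
      calc Real.exp (-γ*α) = Real.exp (-γ) ^ α := Real.exp_mul (-γ) α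
        _ ≤ f x ^ α := Real.rpow_le_rpow (exp_pos _).le (hlb x) hα0
    have h := integral_mono (integrable_const (Real.exp (-γ*α))) hIα hpt
    rw [integral_const] at h
    simp only [measure_univ, probReal_univ, ENNReal.toReal_one, one_smul] at h
    exact lt_of_lt_of_le (exp_pos _) h
  -- linear bound
  have hlin : (α - 1)⁻¹ * Real.log (∫ x, f x ^ α ∂Q) ≤ γ := by
    have hpt : ∀ x, f x ^ α ≤ Real.exp ((α-1)*γ) * f x := by
      intro x
      have h1 : f x ^ α = f x ^ (α-1) * f x := by
        conv_lhs => rw [show α = α - 1 + 1 by ring, Real.rpow_add (hfpos x), Real.rpow_one]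
      have h2 : f x ^ (α-1) ≤ Real.exp ((α-1)*γ) := by
        calc f x ^ (α-1) ≤ Real.exp γ ^ (α-1) :=
              Real.rpow_le_rpow (hfpos x).le (hub x) hα1.le
          _ = Real.exp (γ*(α-1)) := (Real.exp_mul γ (α-1)).symm
          _ = Real.exp ((α-1)*γ) := by rw [mul_comm]
      rw [h1]
      exact mul_le_mul_of_nonneg_right h2 (hfpos x).le
    have h := integral_mono hIα (hIf.const_mul _) hpt
    rw [integral_const_mul] at h
    have h2 : ∫ x, f x ^ α ∂Q ≤ Real.exp ((α-1)*γ) := by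
      calc ∫ x, f x ^ α ∂Q ≤ Real.exp ((α-1)*γ) * ∫ x, f x ∂Q := h
        _ ≤ Real.exp ((α-1)*γ) * 1 := mul_le_mul_of_nonneg_left hm1 (exp_pos _).le
        _ = Real.exp ((α-1)*γ) := mul_one _
    have h3 := Real.log_le_log hIpos h2
    rw [Real.log_exp] at h3
    have h4 := mul_le_mul_of_nonneg_left h3 (inv_nonneg.2 hα1.le)
    rwa [inv_mul_cancel_left₀ hα1.ne'] at h4
  by_cases hcase : α * γ ≤ 2/3
  · -- quadratic regime
    obtain ⟨a, hadef⟩ : ∃ a : ℝ, a = Real.exp (-γ) := ⟨_, rfl⟩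
    obtain ⟨b, hbdef⟩ : ∃ b : ℝ, b = Real.exp γ := ⟨_, rfl⟩
    have hlb' : ∀ x, a ≤ f x := by rw [hadef]; exact hlb
    have hub' : ∀ x, f x ≤ b := by rw [hbdef]; exact hub
    have hab1 : a * b = 1 := by
      rw [hadef, hbdef, ← Real.exp_add]
      simp
    have ha1 : a ≤ 1 := by rw [hadef]; exact Real.exp_le_one_iff.2 (by linarith)
    have hb1 : 1 ≤ b := by rw [hbdef]; exact Real.one_le_exp hγ
    have ha0 : 0 < a := by rw [hadef]; exact exp_pos _
    have hb0 : 0 < b := by rw [hbdef]; exact exp_pos _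
    have habl : a < b := by rw [hadef, hbdef]; exact Real.exp_lt_exp.2 (by linarith)
    have hba : (0:ℝ) < b - a := by linarith
    have hγ23 : γ ≤ 2/3 := by nlinarith
    obtain ⟨u, hudef⟩ : ∃ u : ℝ, u = (α-1)*γ := ⟨_, rfl⟩
    have hu0 : 0 ≤ u := hudef ▸ mul_nonneg hα1.le hγ
    have hu23 : u ≤ 2/3 := by rw [hudef]; nlinarith
    obtain ⟨C, hCdef⟩ : ∃ C : ℝ, C = 1/2 + (2/9)*u := ⟨_, rfl⟩
    have hC0 : 0 ≤ C := by rw [hCdef]; linarith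
    obtain ⟨s, hsdef⟩ : ∃ s : ℝ, s = γ*(a+b)/(b-a) := ⟨_, rfl⟩
    obtain ⟨t, htdef⟩ : ∃ t : ℝ, t = (-(2*γ))/(b-a) := ⟨_, rfl⟩
    have hs0 : 0 ≤ s := by
      rw [hsdef]
      have : 0 ≤ a + b := by linarith
      positivity
    -- pointwise exponential expansion
    have hpt0 : ∀ x, f x ^ α ≤
        f x + (α-1) * (f x * Real.log (f x)) + ((α-1)^2*C) * (f x * Real.log (f x) ^ 2) := by
      intro x
      have hy : |(α-1)*Real.log (f x)| ≤ u := by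
        rw [abs_mul, abs_of_pos hα1, hudef]
        exact mul_le_mul_of_nonneg_left (hL x) hα1.le
      have hq := taylor3_abs' hy (hu23.trans (by norm_num))
      have hrpow : f x ^ α = f x * Real.exp ((α-1)*Real.log (f x)) := by
        rw [Real.rpow_def_of_pos (hfpos x)]
        rw [show Real.log (f x) * α = Real.log (f x) + (α-1)*Real.log (f x) by ring,
          Real.exp_add, Real.exp_log (hfpos x)]
      rw [hrpow]
      calc f x * Real.exp ((α-1)*Real.log (f x))
          ≤ f x * (1 + (α-1)*Real.log (f x) + C * ((α-1)*Real.log (f x))^2) := by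
            refine mul_le_mul_of_nonneg_left ?_ (hfpos x).le
            rw [hCdef]
            exact hq
        _ = f x + (α-1) * (f x * Real.log (f x))
            + ((α-1)^2*C) * (f x * Real.log (f x)^2) := by ring
    -- chord bound, pointwise
    have hchordpt : ∀ x, f x * Real.log (f x) ≤ s * f x + t := by
      intro x
      have h := chord_mul_log' ha0 habl (hlb' x) (hub' x)
      have hla : Real.log a = -γ := by rw [hadef, Real.log_exp]
      have hlb2 : Real.log b = γ := by rw [hbdef, Real.log_exp]
      rw [hla, hlb2] at h
      refine h.trans (le_of_eq ?_)
      have e : (b - f x) * (a * (-γ)) + (f x - a) * (b * γ)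
          = γ*(a+b)*(f x) - 2*γ*(a*b) := by ring
      rw [e, hab1, hsdef, htdef]
      field_simp
      ring
    -- pointwise bound on f (log f)^2
    have hpt2 : ∀ x, f x * Real.log (f x) ^ 2 ≤ γ^2 * b^2 := by
      have hbg : b - 1 ≤ γ * b := by
        have h1 : 1 - γ ≤ a := by
          have := Real.add_one_le_exp (-γ)
          rw [← hadef] at this
          linarith
        have hmul := mul_le_mul_of_nonneg_right h1 hb0.le
        have e1 : (1-γ)*b = b - γ*b + (a*b - a*b) := by ring
        nlinarith [hmul, hab1]
      intro x
      have h1 := mul_log_sq_le' (hfpos x)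
      have h2 : (f x - 1)^2 ≤ (b-1)^2 := by
        have hu' : f x - 1 ≤ b - 1 := by have := hub' x; linarith
        have hl' : -(b-1) ≤ f x - 1 := by
          have h3 := hlb' x
          have hamb : 2 ≤ a + b := by nlinarith [hab1]
          linarith
        exact sq_le_sq' hl' hu'
      have h3 : (b-1)^2 ≤ (γ*b)^2 := pow_le_pow_left₀ (by linarith) hbg 2
      calc f x * Real.log (f x) ^ 2 ≤ (f x - 1)^2 := h1
        _ ≤ (b-1)^2 := h2
        _ ≤ (γ*b)^2 := h3
        _ = γ^2 * b^2 := by ring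
    -- the real-number chord value bound : s + t ≤ γ²/2
    have hst : s + t ≤ γ^2/2 := by
      rw [hsdef, htdef]
      have hmerge : γ*(a+b)/(b-a) + (-(2*γ))/(b-a) = (γ*(a+b) - 2*γ)/(b-a) := by ring
      rw [hmerge, div_le_iff₀ hba]
      have ht5 := taylor5' hγpos.le (by linarith : γ ≤ 1)
      rw [← hadef] at ht5
      have key2 : 2*(1-a) ≤ γ*(1+a) := by
        have hmul := mul_le_mul_of_nonneg_left ht5 (by linarith : (0:ℝ) ≤ 2 + γ)
        nlinarith [hmul, mul_nonneg (pow_nonneg hγ 3) (by linarith : (0:ℝ) ≤ 2 - γ),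
          mul_nonneg (pow_nonneg hγ 5) (by linarith : (0:ℝ) ≤ 13 - 6*γ)]
      have key2' : 2*(b-1) ≤ γ*(1+b) := by
        have hmul := mul_le_mul_of_nonneg_left key2 hb0.le
        nlinarith [hmul, hab1]
      have F := mul_le_mul_of_nonneg_left key2'
        (mul_nonneg hγpos.le (by linarith : (0:ℝ) ≤ 1-a))
      nlinarith [F, hab1, hγpos.le]
    -- single integral comparison against an affine function of f
    have hptall : ∀ x, f x ^ α ≤
        (1 + (α-1)*s) * f x + ((α-1)*t + ((α-1)^2*C)*(γ^2*b^2)) := by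
      intro x
      have t1 := mul_le_mul_of_nonneg_left (hchordpt x) hα1.le
      have t2 := mul_le_mul_of_nonneg_left (hpt2 x)
        (by positivity : (0:ℝ) ≤ (α-1)^2*C)
      have t0 := hpt0 x
      nlinarith [t0, t1, t2]
    have hA0 : 0 ≤ 1 + (α-1)*s := by
      have : 0 ≤ (α-1)*s := mul_nonneg hα1.le hs0
      linarith
    have hIle : ∫ x, f x ^ α ∂Q ≤ 1 + (α-1)*(γ^2/2) + ((α-1)^2*C)*(γ^2*b^2) := by
      have h := integral_mono hIα ((hIf.const_mul _).add (integrable_const _)) hptall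
      simp only [Pi.add_apply] at h
      rw [integral_add (hIf.const_mul _) (integrable_const _), integral_const_mul,
        integral_const] at h
      simp only [measure_univ, probReal_univ, ENNReal.toReal_one, one_smul] at h
      have h2 : (1 + (α-1)*s) * (∫ x, f x ∂Q) ≤ (1 + (α-1)*s) * 1 :=
        mul_le_mul_of_nonneg_left hm1 hA0
      have h3 := mul_le_mul_of_nonneg_left hst hα1.le
      linarith
    have hquad : (α - 1)⁻¹ * Real.log (∫ x, f x ^ α ∂Q) ≤ 3/2*α*γ^2 := by
      have hlognum := Real.log_le_sub_one_of_pos hIpos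
      have hlog2 : Real.log (∫ x, f x ^ α ∂Q)
          ≤ (α-1) * (γ^2/2 + (α-1)*C*γ^2*b^2) := by
        have : (α-1)*(γ^2/2) + ((α-1)^2*C)*(γ^2*b^2)
            = (α-1) * (γ^2/2 + (α-1)*C*γ^2*b^2) := by ring
        linarith [hIle, hlognum]
      have hD : (α - 1)⁻¹ * Real.log (∫ x, f x ^ α ∂Q)
          ≤ γ^2/2 + (α-1)*C*γ^2*b^2 := by
        have h4 := mul_le_mul_of_nonneg_left hlog2 (inv_nonneg.2 hα1.le)
        rwa [inv_mul_cancel_left₀ hα1.ne'] at h4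
      refine hD.trans ?_
      have hb2 : b^2 = Real.exp (γ + γ) := by rw [hbdef, sq, ← Real.exp_add]
      have hb20 : (0:ℝ) ≤ b^2 := sq_nonneg b
      rcases le_or_gt α 2 with hα2 | hα2
      · -- α ≤ 2
        have huγ : u ≤ 1/3 := by
          have h1 : u ≤ γ := by rw [hudef]; nlinarith
          have h2 : u ≤ 2/3 - γ := by rw [hudef]; nlinarith
          linarith
        have hC' : C ≤ 31/54 := by rw [hCdef]; linarith
        have hb2' : b^2 ≤ 19/5 := by
          rw [hb2]
          calc Real.exp (γ + γ) ≤ Real.exp (4/3) := Real.exp_le_exp.2 (by linarith)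
            _ ≤ 19/5 := exp_43'
        have hCb : C * b^2 ≤ 589/270 := by nlinarith [hC0, hb20]
        have hterm := mul_le_mul_of_nonneg_left hCb
          (mul_nonneg hα1.le (sq_nonneg γ))
        have hx : (0:ℝ) ≤ 454 - 184*α := by linarith
        nlinarith [hterm, mul_nonneg (sq_nonneg γ) hx]
      · -- α > 2
        have hγ13 : γ ≤ 1/3 := by nlinarith
        have hC' : C ≤ 35/54 := by rw [hCdef]; linarith
        have hb2' : b^2 ≤ 2 := by
          rw [hb2]
          calc Real.exp (γ + γ) ≤ Real.exp (2/3) := Real.exp_le_exp.2 (by linarith)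
            _ ≤ 2 := exp_23'
        have hCb : C * b^2 ≤ 35/27 := by nlinarith [hC0, hb20]
        have hterm := mul_le_mul_of_nonneg_left hCb
          (mul_nonneg hα1.le (sq_nonneg γ))
        have hx : (0:ℝ) ≤ 11*α + 43 := by linarith
        nlinarith [hterm, mul_nonneg (sq_nonneg γ) hx]
    exact le_min hlin hquad
  · -- linear regime: γ ≤ (3/2)αγ²
    push_neg at hcase
    have hquad : γ ≤ 3/2*α*γ^2 := by nlinarith [mul_le_mul_of_nonneg_left hcase.le hγ]
    exact le_min hlin (hlin.trans hquad)
end
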